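/- For every word w ∈ {a,b}⁺ and every i ≥ 1, the word w^{i+1} belongs to the language generated by the i-displacement context-free grammar G_i with nonterminals S (rank 0) and T (rank i), rules S → ((…(aT ⊙₁ a)…) ⊙₁ a) and symmetric rule with b, T → ((…(aT ⊙₁ 1a)…) ⊙_i 1a), symmetric rule with b, and T → 1^i. In particular for i = 2, the word (aba)³ = abaabaaba is derivable from S. -/

import Mathlib

/-- Words over `Σ₁ = Σ ∪ {1}`: the separator `1` is `none`; the rank of a word
is the number of occurrences of the separator. -/
def rk {α : Type*} (w : List (Option α)) : ℕ := w.countP (·.isNone)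

/-- `icl u j v` is the intercalation `u ⊙_j v`: replace the `j`-th occurrence
(counting from 1) of the separator in `u` by the word `v`. -/
def icl {α : Type*} : List (Option α) → ℕ → List (Option α) → List (Option α)
  | [], _, _ => []
  | none :: t, j, v => if j = 1 then v ++ t else none :: icl t (j - 1) v
  | some a :: t, j, v => some a :: icl t j v

/-- The alphabet `{a, b}`: `a := false`, `b := true`; words over `Σ₁` are lists
of `Option Bool` with the separator `1` rendered as `none`. -/
abbrev W := List (Option Bool)

/-- The value of the right-hand side of the `T`-rule of `G_i` for letter `c`:
`(…(c·T ⊙₁ 1c) …) ⊙_i 1c`, i.e. starting from `c·t` intercalate `1c` at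
positions `1, 2, …, i`. -/
def applyT (c : Bool) (i : ℕ) (t : W) : W :=
  (List.range i).foldl (fun u j => icl u (j + 1) [none, some c]) (some c :: t)

/-- The value of the right-hand side of the `S`-rule of `G_i` for letter `c`:
`(…(c·T ⊙₁ c) …) ⊙₁ c`, i.e. starting from `c·t` intercalate `c` at position `1`,
`i` times. -/
def applyS (c : Bool) (i : ℕ) (t : W) : W :=
  (List.range i).foldl (fun u _ => icl u 1 [some c]) (some c :: t)

/-- Words derivable from the nonterminal `T` of `G_i` (values of ground terms). -/
inductive TDer (i : ℕ) : W → Prop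
  | base : TDer i (List.replicate i (none : Option Bool))
  | step (c : Bool) {t : W} : TDer i t → TDer i (applyT c i t)

/-- Words derivable from the start symbol `S` of `G_i`. -/
inductive SDer (i : ℕ) : W → Prop
  | step (c : Bool) {t : W} : TDer i t → SDer i (applyS c i t)

/-- `w^p`. -/
def wpow (w : List Bool) (p : ℕ) : List Bool := (List.replicate p w).flatten

-- auxiliary lemmas

lemma rk_append {α : Type*} (s t : List (Option α)) : rk (s ++ t) = rk s + rk t :=
  List.countP_append

lemma rk_cons_some {α : Type*} (a : α) (t : List (Option α)) :
    rk (some a :: t) = rk t := by simp [rk, List.countP_cons]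

lemma rk_map_some (x : List Bool) : rk (x.map some) = 0 := by
  induction x with
  | nil => rfl
  | cons a t ih => rw [List.map_cons, rk_cons_some, ih]

lemma icl_at {α : Type*} (A B v : List (Option α)) :
    icl (A ++ none :: B) (rk A + 1) v = A ++ v ++ B := by
  induction A with
  | nil => simp [rk, icl]
  | cons h t ih =>
    cases h with
    | none =>
      have h1 : rk (none :: t) = rk t + 1 := by simp [rk, List.countP_cons]
      rw [h1]
      simp only [List.cons_append, icl]
      rw [if_neg (by omega)]
      simp only [Nat.add_sub_cancel, List.append_eq] at ih ⊢
      rw [ih]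
    | some a =>
      rw [rk_cons_some]
      simp only [List.cons_append, icl, List.append_eq] at ih ⊢
      rw [ih]

def sep (i : ℕ) (x : List Bool) : W :=
  x.map some ++ (List.replicate i (none :: x.map some)).flatten

lemma rk_flat (k : ℕ) (p : W) (hp : rk p = 0) :
    rk ((List.replicate k (p ++ [none])).flatten) = k := by
  induction k with
  | zero => rfl
  | succ n ih =>
    rw [List.replicate_succ, List.flatten_cons, rk_append, rk_append, ih, hp]
    simp [rk]; omega

lemma swap (n : ℕ) (p : W) :
    (List.replicate n (p ++ [none])).flatten ++ p = p ++ (List.replicate n (none :: p)).flatten := by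
  induction n with
  | zero => simp
  | succ m ih =>
    rw [List.replicate_succ, List.flatten_cons, List.replicate_succ, List.flatten_cons]
    simp only [List.append_assoc] at ih ⊢
    rw [ih]
    simp

lemma aux_T (c : Bool) (x : List Bool) :
    ∀ m k, (List.range' k m).foldl (fun u j => icl u (j + 1) [none, some c])
      ((List.replicate k ((some c :: x.map some) ++ [none])).flatten ++ (some c :: x.map some)
        ++ (List.replicate m (none :: x.map some)).flatten)
      = (List.replicate (k + m) ((some c :: x.map some) ++ [none])).flatten
          ++ (some c :: x.map some) := by
  intro m
  induction m with
  | zero => intro k; rw [Nat.add_zero]; simp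
  | succ m ih =>
    intro k
    set y : W := some c :: x.map some with hy
    rw [List.range'_succ, List.foldl_cons]
    have hA : rk ((List.replicate k (y ++ [none])).flatten ++ y) = k := by
      rw [rk_append, rk_flat k y (by rw [hy, rk_cons_some]; exact rk_map_some x),
        hy, rk_cons_some, rk_map_some]
      omega
    have hstep :
        icl ((List.replicate k (y ++ [none])).flatten ++ y
            ++ (List.replicate (m+1) (none :: x.map some)).flatten) (k + 1) [none, some c]
        = (List.replicate (k+1) (y ++ [none])).flatten ++ y
            ++ (List.replicate m (none :: x.map some)).flatten := by
      have e1 : (List.replicate k (y ++ [none])).flatten ++ y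
            ++ (List.replicate (m+1) (none :: x.map some)).flatten
          = ((List.replicate k (y ++ [none])).flatten ++ y)
            ++ none :: (x.map some ++ (List.replicate m (none :: x.map some)).flatten) := by
        rw [List.replicate_succ, List.flatten_cons]
        simp
      have key := icl_at ((List.replicate k (y ++ [none])).flatten ++ y)
        (x.map some ++ (List.replicate m (none :: x.map some)).flatten) [none, some c]
      rw [hA] at key
      rw [e1, key, List.replicate_add]
      simp [hy]
    rw [hstep]
    have hn : k + (m + 1) = (k + 1) + m := by omega
    rw [hn]
    exact ih (k + 1)

lemma aux_S (c : Bool) (x : List Bool) :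
    ∀ m k, (List.range' k m).foldl (fun u _ => icl u 1 [some c])
      ((List.replicate (k+1) (some c :: x.map some)).flatten
        ++ (List.replicate m (none :: x.map some)).flatten)
      = (List.replicate (k+1+m) (some c :: x.map some)).flatten := by
  intro m
  induction m with
  | zero => intro k; simp
  | succ m ih =>
    intro k
    set y : W := some c :: x.map some with hy
    rw [List.range'_succ, List.foldl_cons]
    have hA : rk ((List.replicate (k+1) y).flatten) = 0 := by
      rw [hy]
      induction (k+1) with
      | zero => rfl
      | succ n ihn =>
        rw [List.replicate_succ, List.flatten_cons, rk_append, ihn, rk_cons_some, rk_map_some]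
    have hstep :
        icl ((List.replicate (k+1) y).flatten
            ++ (List.replicate (m+1) (none :: x.map some)).flatten) 1 [some c]
        = (List.replicate (k+2) y).flatten
            ++ (List.replicate m (none :: x.map some)).flatten := by
      have e1 : (List.replicate (k+1) y).flatten
            ++ (List.replicate (m+1) (none :: x.map some)).flatten
          = (List.replicate (k+1) y).flatten
            ++ none :: (x.map some ++ (List.replicate m (none :: x.map some)).flatten) := by
        rw [(List.replicate_succ : List.replicate (m+1) (none :: x.map some) = _), List.flatten_cons]
        simp
      have key := icl_at ((List.replicate (k+1) y).flatten)
        (x.map some ++ (List.replicate m (none :: x.map some)).flatten) [some c]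
      rw [hA] at key
      rw [e1, key]
      have : (List.replicate (k+2) y).flatten
          = (List.replicate (k+1) y).flatten ++ y := by
        have : k + 2 = (k+1) + 1 := rfl
        rw [this, List.replicate_add, List.flatten_append]
        simp
      rw [this, hy]
      simp
    rw [hstep]
    have hn : k + 1 + (m + 1) = (k + 1) + 1 + m := by omega
    rw [hn]
    exact ih (k + 1)

lemma TDer_sep (i : ℕ) (x : List Bool) : TDer i (sep i x) := by
  induction x with
  | nil =>
    have : sep i [] = List.replicate i (none : Option Bool) := by
      unfold sep
      induction i with
      | zero => rfl
      | succ n ihn => rw [List.replicate_succ, List.flatten_cons, List.replicate_succ]; simpa using ihn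
    rw [this]; exact TDer.base
  | cons c t ih =>
    have h := TDer.step c ih
    have e : applyT c i (sep i t) = sep i (c :: t) := by
      unfold applyT sep
      rw [List.range_eq_range']
      have start : (some c :: (t.map some ++ (List.replicate i (none :: t.map some)).flatten))
          = (List.replicate 0 ((some c :: t.map some) ++ [none])).flatten ++ (some c :: t.map some)
            ++ (List.replicate i (none :: t.map some)).flatten := by simp
      rw [start, aux_T c t i 0]
      have := swap i (some c :: t.map some)
      simpa using this
    rwa [e] at h

lemma SDer_word (i : ℕ) (c : Bool) (x : List Bool) :
    SDer i ((List.replicate (i+1) (some c :: x.map some)).flatten) := by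
  have h := SDer.step c (TDer_sep i x)
  have e : applyS c i (sep i x) = (List.replicate (i+1) (some c :: x.map some)).flatten := by
    unfold applyS sep
    rw [List.range_eq_range']
    have start : (some c :: (x.map some ++ (List.replicate i (none :: x.map some)).flatten))
        = (List.replicate (0+1) (some c :: x.map some)).flatten
          ++ (List.replicate i (none :: x.map some)).flatten := by simp
    rw [start, aux_S c x i 0]
    have hn : 0 + 1 + i = i + 1 := by omega
    rw [hn]
  rwa [e] at h

lemma wpow_map (w : List Bool) (p : ℕ) :
    (wpow w p).map some = (List.replicate p (w.map some)).flatten := by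
  unfold wpow
  induction p with
  | zero => rfl
  | succ n ih => rw [List.replicate_succ, List.flatten_cons, List.replicate_succ,
      List.flatten_cons, List.map_append, ih]


open Bool in
/-- for every `w ∈ {a,b}⁺` and every `i ≥ 1`, the word `w^{i+1}`
belongs to the language of `G_i`; in particular `(aba)³ = abaabaaba` is
derivable from `S` in `G₂` (with `a := false`, `b := true`). -/
theorem pow_mem_Gi :
    (∀ i : ℕ, 1 ≤ i → ∀ w : List Bool, w ≠ [] →
      SDer i ((wpow w (i + 1)).map some)) ∧
    SDer 2 (([false, true, false, false, true, false, false, true, false] :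
      List Bool).map some) := by
  have main : ∀ i : ℕ, 1 ≤ i → ∀ w : List Bool, w ≠ [] →
      SDer i ((wpow w (i + 1)).map some) := by
    intro i _ w hw
    cases w with
    | nil => exact absurd rfl hw
    | cons c x =>
      rw [wpow_map]
      simpa using SDer_word i c x
  refine ⟨main, ?_⟩
  have h := main 2 (by norm_num) [false, true, false] (by simp)
  have e : wpow [false, true, false] (2+1)
      = [false, true, false, false, true, false, false, true, false] := by rfl
  rwa [e] at h
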